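/- For every pair of real numbers t, ε with t ≥ ε > 0 and all integers K ≥ 1 and M ≥ 3, there exists a finite collection 𝒱 of unit vectors in (ℝ^M)^K such that: (a) |𝒱| ≤ K(1 + t ε^{-1})^{(M−1)/2} · 4^{M−1}, and consequently log|𝒱| ≤ 3M log(K(1 + t ε^{-1})); (b) E_{t−ε} ⊆ A(𝒱, t−ε) ⊆ E_t ⊆ A(𝒱, t) ⊆ E_{t+ε}; and (c) for each v ∈ 𝒱 there is exactly one k ∈ {1,…,K} with π_k v ≠ 0. -/

import Mathlib

open MeasureTheory ProbabilityTheory Real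
open scoped ENNReal NNReal

noncomputable section

/-- The Euclidean dot product on `(ℝ^M)^K`, viewed as `K` blocks of size `M`. -/
def bdot {K M : ℕ} (v w : Fin K → Fin M → ℝ) : ℝ := ∑ k, ∑ j, v k j * w k j

/-- The Euclidean norm `‖π_k x‖₂` of the `k`-th block of `x ∈ (ℝ^M)^K`. -/
def blockNorm {K M : ℕ} (x : Fin K → Fin M → ℝ) (k : Fin K) : ℝ :=
  Real.sqrt (∑ j, x k j ^ 2)

/-- `E_t = {x : max_k ‖π_k x‖₂ ≤ t}`. -/
def Ecube (K M : ℕ) (t : ℝ) : Set (Fin K → Fin M → ℝ) := {x | ∀ k, blockNorm x k ≤ t}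

/-- `A(𝒱, s) = {w : vᵀw ≤ s for all v ∈ 𝒱}`. -/
def Apoly {K M : ℕ} (𝒱 : Finset (Fin K → Fin M → ℝ)) (s : ℝ) :
    Set (Fin K → Fin M → ℝ) := {w | ∀ v ∈ 𝒱, bdot v w ≤ s}

/-- A centered Gaussian random vector taking values in `(ℝ^M)^K`: every linear functional
of it is a centered one-dimensional Gaussian. -/
def IsCenteredGaussianBlk {Ω : Type*} [MeasureSpace Ω] {K M : ℕ}
    (X : Ω → Fin K → Fin M → ℝ) : Prop :=
  Measurable X ∧ ∀ a : Fin K → Fin M → ℝ, ∃ v : NNReal,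
    Measure.map (fun ω => bdot a (X ω)) (ℙ : Measure Ω) = gaussianReal 0 v

section Aux

open Metric

lemma aux_nat_pow : ∀ n : ℕ, 2 ≤ n → 9 ^ (n + 1) ≤ 32 ^ n := by
  intro n hn
  induction n, hn using Nat.le_induction with
  | base => norm_num
  | succ n hn ih =>
      calc 9 ^ (n + 2) = 9 * 9 ^ (n+1) := by ring
        _ ≤ 9 * 32 ^ n := by omega
        _ ≤ 32 * 32 ^ n := by omega
        _ = 32 ^ (n+1) := by ring

lemma aux_poly (M : ℕ) {a : ℝ} (ha : 0 < a) (ha2 : a ≤ 1/2) :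
    (1+a)^M - (1-a)^M ≤ 2*a*(3/2)^M := by
  have h1 : (1+a)^M = ∑ j ∈ Finset.range (M+1), a^j * 1^(M-j) * (M.choose j : ℝ) := by
    rw [← add_pow]; ring_nf
  have h2 : (1-a)^M = ∑ j ∈ Finset.range (M+1), (-a)^j * 1^(M-j) * (M.choose j : ℝ) := by
    rw [← add_pow]; ring_nf
  have h3 : ((3:ℝ)/2)^M = ∑ j ∈ Finset.range (M+1), (1/2:ℝ)^j * 1^(M-j) * (M.choose j : ℝ) := by
    rw [← add_pow]; norm_num
  have h4 : ((1:ℝ)/2)^M = ∑ j ∈ Finset.range (M+1), (-(1/2):ℝ)^j * 1^(M-j) * (M.choose j : ℝ) := by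
    rw [← add_pow]; norm_num
  have key : (1+a)^M - (1-a)^M ≤ 2*a*((3/2)^M - (1/2)^M) := by
    rw [h1, h2, h3, h4, ← Finset.sum_sub_distrib, ← Finset.sum_sub_distrib, Finset.mul_sum]
    apply Finset.sum_le_sum
    intro j hj
    simp only [one_pow, mul_one]
    rcases Nat.even_or_odd j with hje | hjo
    · rw [hje.neg_pow, hje.neg_pow]; ring_nf; rfl
    · rw [hjo.neg_pow, hjo.neg_pow]
      have hC : (0:ℝ) ≤ (M.choose j : ℝ) := Nat.cast_nonneg _
      have hj1 : 1 ≤ j := hjo.pos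
      have hpow : a^j ≤ a * (1/2)^(j-1) := by
        calc a^j = a * a^(j-1) := by
              rw [← pow_succ']; congr 1; omega
          _ ≤ a * (1/2)^(j-1) := by
              apply mul_le_mul_of_nonneg_left (pow_le_pow_left₀ ha.le ha2 _) ha.le
      have h12 : ((1:ℝ)/2)^(j-1) = 2 * (1/2)^j := by
        conv_rhs => rw [show j = (j-1) + 1 by omega]
        rw [pow_succ]; ring
      have h5 : a^j - -a^j ≤ 2*a*((1/2)^j - -(1/2)^j) := by
        rw [h12] at hpow; nlinarith
      nlinarith [mul_le_mul_of_nonneg_right h5 hC]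
  have : (0:ℝ) ≤ 2*a*(1/2)^M := by positivity
  nlinarith [key]

lemma aux_packing {M : ℕ} (hM : 1 ≤ M) {a : ℝ} (ha : 0 < a) (ha2 : a ≤ 1/2)
    (S : Finset (EuclideanSpace ℝ (Fin M))) (hS : ∀ x ∈ S, ‖x‖ = 1)
    (hsep : ∀ x ∈ S, ∀ y ∈ S, x ≠ y → 2*a ≤ dist x y) :
    (S.card : ℝ) * a ^ M ≤ (1+a)^M - (1-a)^M := by
  let E := EuclideanSpace ℝ (Fin M)
  have hmono : (1-a)^M ≤ (1+a)^M := pow_le_pow_left₀ (by linarith) (by linarith) M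
  haveI : Nonempty (Fin M) := ⟨⟨0, by omega⟩⟩
  haveI : Nontrivial E := inferInstance
  set μ : Measure E := volume
  have hdim : Module.finrank ℝ E = M := finrank_euclideanSpace_fin
  set v : ℝ≥0∞ := μ (ball (0:E) 1) with hv
  have hv0 : v ≠ 0 := (measure_ball_pos μ 0 one_pos).ne'
  have hvtop : v ≠ ⊤ := measure_ball_lt_top.ne
  have hdisj : Set.Pairwise ↑S (Function.onFun Disjoint fun x : E => ball x a) := by
    intro x hx y hy hxy
    exact ball_disjoint_ball (by have := hsep x hx y hy hxy; linarith)
  have hsum : μ (⋃ x ∈ S, ball x a) = ∑ x ∈ S, μ (ball x a) :=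
    measure_biUnion_finset hdisj (fun b _ => measurableSet_ball)
  have hball : ∀ x : E, μ (ball x a) = ENNReal.ofReal (a ^ M) * v := by
    intro x; rw [Measure.addHaar_ball μ x ha.le, hdim]
  have hsub : (⋃ x ∈ S, ball x a) ⊆ closedBall (0:E) (1+a) \ ball (0:E) (1-a) := by
    intro z hz
    simp only [Set.mem_iUnion] at hz
    obtain ⟨x, hx, hzx⟩ := hz
    rw [mem_ball] at hzx
    have hx1 : dist x (0:E) = 1 := by rw [dist_zero_right]; exact hS x hx
    constructor
    · rw [mem_closedBall]
      calc dist z 0 ≤ dist z x + dist x 0 := dist_triangle _ _ _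
        _ ≤ a + 1 := by rw [hx1]; linarith
        _ = 1 + a := by ring
    · intro hz2
      rw [mem_ball] at hz2
      have := dist_triangle x z (0:E)
      rw [dist_comm z x] at *
      rw [hx1] at this
      linarith
  have hannulus : μ (closedBall (0:E) (1+a) \ ball (0:E) (1-a))
      ≤ ENNReal.ofReal ((1+a)^M - (1-a)^M) * v := by
    rw [measure_diff (ball_subset_closedBall.trans
          (closedBall_subset_closedBall (by linarith)))
        measurableSet_ball.nullMeasurableSet measure_ball_lt_top.ne,
      Measure.addHaar_closedBall μ _ (by linarith : (0:ℝ) ≤ 1+a),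
      Measure.addHaar_ball μ _ (by linarith : (0:ℝ) ≤ 1-a), hdim]
    rw [tsub_le_iff_right, ← add_mul,
      ← ENNReal.ofReal_add (by linarith) (pow_nonneg (by linarith) M)]
    apply le_of_eq; congr 2; ring
  have main : (S.card : ℝ≥0∞) * (ENNReal.ofReal (a ^ M) * v)
      ≤ ENNReal.ofReal ((1+a)^M - (1-a)^M) * v := by
    calc (S.card : ℝ≥0∞) * (ENNReal.ofReal (a ^ M) * v)
        = ∑ x ∈ S, μ (ball x a) := by
          rw [Finset.sum_congr rfl (fun x _ => hball x), Finset.sum_const, nsmul_eq_mul]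
      _ = μ (⋃ x ∈ S, ball x a) := hsum.symm
      _ ≤ μ (closedBall (0:E) (1+a) \ ball (0:E) (1-a)) := measure_mono hsub
      _ ≤ _ := hannulus
  rw [← mul_assoc] at main
  have main2 : (S.card : ℝ≥0∞) * ENNReal.ofReal (a ^ M)
      ≤ ENNReal.ofReal ((1+a)^M - (1-a)^M) :=
    (ENNReal.mul_le_mul_iff_left hv0 hvtop).mp main
  rw [← ENNReal.ofReal_natCast, ← ENNReal.ofReal_mul (by positivity)] at main2
  exact (ENNReal.ofReal_le_ofReal_iff (by linarith)).mp main2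

lemma aux_net {M : ℕ} (hM : 1 ≤ M) {a : ℝ} (ha : 0 < a) (ha2 : a ≤ 1/2) :
    ∃ S : Finset (EuclideanSpace ℝ (Fin M)),
      (∀ x ∈ S, ‖x‖ = 1) ∧ (S.card : ℝ) * a ^ M ≤ (1+a)^M - (1-a)^M ∧
      ∀ u : EuclideanSpace ℝ (Fin M), ‖u‖ = 1 → ∃ v ∈ S, dist u v ≤ 2*a := by
  classical
  set good : Finset (EuclideanSpace ℝ (Fin M)) → Prop :=
    fun S => (∀ x ∈ S, ‖x‖ = 1) ∧ ∀ x ∈ S, ∀ y ∈ S, x ≠ y → 2*a ≤ dist x y with hgood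
  have hbound : ∀ S : Finset (EuclideanSpace ℝ (Fin M)), good S →
      S.card ≤ ⌈((1+a)^M - (1-a)^M) / a^M⌉₊ := by
    intro S hS
    have h1 := aux_packing hM ha ha2 S hS.1 hS.2
    have haM : (0:ℝ) < a^M := pow_pos ha M
    have : (S.card : ℝ) ≤ ((1+a)^M - (1-a)^M) / a^M := by
      rw [le_div_iff₀ haM]; exact h1
    exact_mod_cast this.trans (Nat.le_ceil _)
  set cards : Set ℕ := {n | ∃ S : Finset (EuclideanSpace ℝ (Fin M)), good S ∧ S.card = n}
    with hcards
  have hne : cards.Nonempty := ⟨0, ∅, ⟨by simp, by simp⟩, rfl⟩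
  have hbdd : BddAbove cards := by
    refine ⟨⌈((1+a)^M - (1-a)^M) / a^M⌉₊, ?_⟩
    rintro n ⟨S, hS, rfl⟩
    exact hbound S hS
  obtain ⟨S, hSgood, hScard⟩ := Nat.sSup_mem hne hbdd
  refine ⟨S, hSgood.1, aux_packing hM ha ha2 S hSgood.1 hSgood.2, ?_⟩
  intro u hu
  by_contra hcon
  push_neg at hcon
  have huS : u ∉ S := by
    intro h
    have := hcon u h
    simp only [dist_self] at this
    linarith
  have hgood' : good (insert u S) := by
    constructor
    · intro x hx
      rcases Finset.mem_insert.mp hx with rfl | hx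
      · exact hu
      · exact hSgood.1 x hx
    · intro x hx y hy hxy
      rcases Finset.mem_insert.mp hx with rfl | hx' <;>
        rcases Finset.mem_insert.mp hy with rfl | hy'
      · exact absurd rfl hxy
      · exact (hcon y hy').le
      · rw [dist_comm]; exact (hcon x hx').le
      · exact hSgood.2 x hx' y hy' hxy
  have hmem : (insert u S).card ∈ cards := ⟨insert u S, hgood', rfl⟩
  have hle := le_csSup hbdd hmem
  rw [Finset.card_insert_of_notMem huS, hScard] at hle
  omega

lemma aux_inner {M : ℕ} {a : ℝ} (u v : EuclideanSpace ℝ (Fin M))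
    (hu : ‖u‖ = 1) (hv : ‖v‖ = 1) (h : dist u v ≤ 2*a) (ha : 0 ≤ a) :
    1 - 2*a^2 ≤ (inner ℝ v u : ℝ) := by
  have h1 : ‖u - v‖^2 = ‖u‖^2 - 2 * (inner ℝ u v : ℝ) + ‖v‖^2 := norm_sub_sq_real u v
  have h2 : dist u v = ‖u - v‖ := dist_eq_norm u v
  have h3 : ‖u - v‖^2 ≤ (2*a)^2 := by
    apply sq_le_sq' <;> nlinarith [norm_nonneg (u - v)]
  have h4 : (inner ℝ v u : ℝ) = (inner ℝ u v : ℝ) := real_inner_comm u v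
  nlinarith

/-- Reinterpret a plain vector as an element of Euclidean space. -/
def toEuc {M : ℕ} (z : Fin M → ℝ) : EuclideanSpace ℝ (Fin M) := WithLp.toLp 2 z

lemma aux_bdot {K M : ℕ} (k : Fin K) (y : EuclideanSpace ℝ (Fin M))
    (x : Fin K → Fin M → ℝ) :
    bdot (Function.update 0 k (fun j => y j)) x
      = (inner ℝ y (toEuc (x k)) : ℝ) := by
  unfold bdot
  rw [Finset.sum_eq_single k]
  · rw [PiLp.inner_apply]
    simp [Function.update_self, RCLike.inner_apply, toEuc, mul_comm]
  · intro b _ hb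
    simp [Function.update_of_ne hb]
  · simp

lemma aux_blockNorm {K M : ℕ} (x : Fin K → Fin M → ℝ) (k : Fin K) :
    blockNorm x k = ‖toEuc (x k)‖ := by
  unfold blockNorm
  rw [EuclideanSpace.norm_eq]
  exact congrArg Real.sqrt (Finset.sum_congr rfl fun j _ => by
    show x k j ^ 2 = ‖x k j‖ ^ 2
    rw [Real.norm_eq_abs, sq_abs])

end Aux

/-- approximation of the sets `E_t` in `(ℝ^M)^K` by polytopes generated by
unit vectors supported on a single block. -/
theorem Ecube_approx_by_polytope (t ε : ℝ) (hε : 0 < ε) (ht : ε ≤ t)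
    (K M : ℕ) (hK : 1 ≤ K) (hM : 3 ≤ M) :
    ∃ 𝒱 : Finset (Fin K → Fin M → ℝ),
      (∀ v ∈ 𝒱, bdot v v = 1) ∧
      ((𝒱.card : ℝ) ≤ (K : ℝ) * (1 + t * ε⁻¹) ^ (((M : ℝ) - 1) / 2) * 4 ^ (M - 1) ∧
        Real.log (𝒱.card : ℝ) ≤ 3 * M * Real.log ((K : ℝ) * (1 + t * ε⁻¹))) ∧
      (Ecube K M (t - ε) ⊆ Apoly 𝒱 (t - ε) ∧ Apoly 𝒱 (t - ε) ⊆ Ecube K M t ∧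
        Ecube K M t ⊆ Apoly 𝒱 t ∧ Apoly 𝒱 t ⊆ Ecube K M (t + ε)) ∧
      (∀ v ∈ 𝒱, ∃! k : Fin K, v k ≠ 0) := by
  classical
  have ht0 : 0 < t := lt_of_lt_of_le hε ht
  have hte : 0 < t + ε := by linarith
  set a : ℝ := Real.sqrt (ε / (2*(t+ε))) with ha_def
  have harg : 0 < ε / (2*(t+ε)) := by positivity
  have ha : 0 < a := Real.sqrt_pos.mpr harg
  have ha2eq : a^2 = ε / (2*(t+ε)) := Real.sq_sqrt harg.le
  have hahalf : a ≤ 1/2 := by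
    have h1 : ε / (2*(t+ε)) ≤ (1/2)^2 := by
      rw [div_le_iff₀ (by positivity)]
      nlinarith
    have := Real.sqrt_le_sqrt h1
    rwa [Real.sqrt_sq (by norm_num : (0:ℝ) ≤ 1/2)] at this
  clear_value a
  obtain ⟨S, hS1, hScard, hSnet⟩ := aux_net (by omega : 1 ≤ M) ha hahalf
  -- net quality in inner-product form
  have hquality : ∀ u : EuclideanSpace ℝ (Fin M), ‖u‖ = 1 →
      ∃ v ∈ S, t ≤ (t+ε) * (inner ℝ v u : ℝ) := by
    intro u hu
    obtain ⟨v, hvS, hvd⟩ := hSnet u hu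
    refine ⟨v, hvS, ?_⟩
    have h1 := aux_inner u v hu (hS1 v hvS) hvd ha.le
    have h2 : (t+ε) * (1 - 2*a^2) = t := by
      rw [ha2eq]; field_simp; ring
    nlinarith
  -- the family of vectors
  set ι : Fin K → EuclideanSpace ℝ (Fin M) → (Fin K → Fin M → ℝ) :=
    fun k y => Function.update 0 k (fun j => y j) with hι
  set 𝒱 : Finset (Fin K → Fin M → ℝ) :=
    Finset.univ.biUnion (fun k => S.image (ι k)) with h𝒱
  clear_value ι 𝒱
  have hmem : ∀ v, v ∈ 𝒱 ↔ ∃ k, ∃ y ∈ S, ι k y = v := by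
    intro v
    simp [h𝒱, Finset.mem_biUnion, Finset.mem_image]
  have hmem' : ∀ k, ∀ y ∈ S, ι k y ∈ 𝒱 := by
    intro k y hy
    exact (hmem _).mpr ⟨k, y, hy, rfl⟩
  have hinner_self : ∀ k, ∀ y ∈ S, bdot (ι k y) (ι k y) = 1 := by
    intro k y hy
    simp only [hι]
    rw [aux_bdot]
    have hyk : toEuc (Function.update (0 : Fin K → Fin M → ℝ) k (fun j => y j) k) = y := by
      rw [Function.update_self]
      rfl
    rw [hyk, real_inner_self_eq_norm_sq, hS1 y hy, one_pow]
  -- E ⊆ A direction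
  have hEA : ∀ s : ℝ, Ecube K M s ⊆ Apoly 𝒱 s := by
    intro s x hx v hv
    obtain ⟨k, y, hyS, rfl⟩ := (hmem v).mp hv
    simp only [hι]
    rw [aux_bdot]
    calc (inner ℝ y (toEuc (x k)) : ℝ)
        ≤ ‖y‖ * ‖toEuc (x k)‖ := real_inner_le_norm _ _
      _ = blockNorm x k := by rw [hS1 y hyS, one_mul, aux_blockNorm]
      _ ≤ s := hx k
  -- A ⊆ E direction (quantitative)
  have hAE : ∀ s : ℝ, 0 ≤ s → ∀ x ∈ Apoly 𝒱 s, ∀ k, t * blockNorm x k ≤ (t+ε) * s := by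
    intro s hs x hx k
    set xk : EuclideanSpace ℝ (Fin M) := toEuc (x k) with hxk_def
    rw [aux_blockNorm, ← hxk_def]
    by_cases hk : xk = 0
    · rw [hk, norm_zero, mul_zero]
      positivity
    · set u : EuclideanSpace ℝ (Fin M) := ‖xk‖⁻¹ • xk with hu_def
      have hu : ‖u‖ = 1 := norm_smul_inv_norm hk
      obtain ⟨v, hvS, hv⟩ := hquality u hu
      have hxk : xk = ‖xk‖ • u := by
        rw [hu_def, smul_smul, mul_inv_cancel₀ (norm_ne_zero_iff.mpr hk), one_smul]
      have h1 : (inner ℝ v xk : ℝ) = ‖xk‖ * (inner ℝ v u : ℝ) := by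
        conv_lhs => rw [hxk]
        rw [real_inner_smul_right]
      have h2 : bdot (ι k v) x ≤ s := hx _ (hmem' k v hvS)
      have h3 : bdot (ι k v) x = (inner ℝ v xk : ℝ) := by
        simp only [hι]
        rw [aux_bdot, ← hxk_def]
      have h4 : t * ‖xk‖ ≤ ((t+ε) * (inner ℝ v u : ℝ)) * ‖xk‖ :=
        mul_le_mul_of_nonneg_right hv (norm_nonneg _)
      calc t * ‖xk‖ ≤ ((t+ε) * (inner ℝ v u : ℝ)) * ‖xk‖ := h4
        _ = (t+ε) * (inner ℝ v xk : ℝ) := by rw [h1]; ring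
        _ ≤ (t+ε) * s := by
            have h2' : (inner ℝ v xk : ℝ) ≤ s := h3 ▸ h2
            exact mul_le_mul_of_nonneg_left h2' hte.le
  -- cardinality bound
  set X : ℝ := 1 + t * ε⁻¹ with hX_def
  clear_value X
  have hX2 : 2 ≤ X := by
    have : 1 ≤ t * ε⁻¹ := by
      calc (1:ℝ) = ε * ε⁻¹ := (mul_inv_cancel₀ hε.ne').symm
        _ ≤ t * ε⁻¹ := mul_le_mul_of_nonneg_right ht (by positivity)
    rw [hX_def]
    linarith
  have hX0 : (0:ℝ) ≤ X := by linarith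
  have hainv : a⁻¹ = Real.sqrt 2 * Real.sqrt X := by
    rw [ha_def, ← Real.sqrt_inv, ← Real.sqrt_mul (by norm_num : (0:ℝ) ≤ 2)]
    congr 1
    rw [hX_def]
    field_simp
    ring
  have hM1 : (1:ℕ) ≤ M := by omega
  -- card S * a^(M-1) ≤ 2*(3/2)^M
  have h5 : (S.card : ℝ) * a^(M-1) ≤ 2*(3/2)^M := by
    have hpoly := aux_poly M ha hahalf
    have hMsplit : a^M = a^(M-1) * a := by
      conv_lhs => rw [show M = (M-1)+1 by omega]
      rw [pow_succ]
    have h' : ((S.card : ℝ) * a^(M-1)) * a ≤ (2*(3/2)^M) * a := by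
      calc ((S.card : ℝ) * a^(M-1)) * a = (S.card : ℝ) * a^M := by rw [hMsplit]; ring
        _ ≤ (1+a)^M - (1-a)^M := hScard
        _ ≤ 2*a*(3/2)^M := hpoly
        _ = (2*(3/2)^M) * a := by ring
    exact le_of_mul_le_mul_right h' ha
  have h6 : (S.card : ℝ) ≤ 2*(3/2)^M * (a⁻¹)^(M-1) := by
    have hone : a^(M-1) * (a⁻¹)^(M-1) = 1 := by
      rw [← mul_pow, mul_inv_cancel₀ ha.ne', one_pow]
    calc (S.card : ℝ) = (S.card : ℝ) * a^(M-1) * (a⁻¹)^(M-1) := by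
          rw [mul_assoc, hone, mul_one]
      _ ≤ 2*(3/2)^M * (a⁻¹)^(M-1) :=
          mul_le_mul_of_nonneg_right h5 (by positivity)
  have hsqrtX : (Real.sqrt X)^(M-1) = X ^ (((M:ℝ)-1)/2) := by
    rw [Real.sqrt_eq_rpow, ← Real.rpow_natCast (X ^ ((1:ℝ)/2)) (M-1),
      ← Real.rpow_mul hX0]
    congr 1
    rw [Nat.cast_sub hM1, Nat.cast_one]
    ring
  have hconst : 2*(3/2:ℝ)^M * (Real.sqrt 2)^(M-1) ≤ 4^(M-1) := by
    set n := M - 1 with hn_def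
    have hMn : M = n + 1 := by omega
    have hn2 : 2 ≤ n := by omega
    have key : (9:ℝ)^(n+1) ≤ 32^n := by exact_mod_cast aux_nat_pow n hn2
    have hL0 : (0:ℝ) ≤ 2*(3/2:ℝ)^M * (Real.sqrt 2)^n := by positivity
    have hR0 : (0:ℝ) ≤ (4:ℝ)^n := by positivity
    have hsq : (2*(3/2:ℝ)^M * (Real.sqrt 2)^n)^2 ≤ ((4:ℝ)^n)^2 := by
      have e2 : ((Real.sqrt 2)^n)^2 = 2^n := by
        rw [← pow_mul, mul_comm, pow_mul, Real.sq_sqrt (by norm_num : (0:ℝ) ≤ 2)]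
      have e3 : (2*(3/2:ℝ)^M * (Real.sqrt 2)^n)^2 = 4 * ((3/2:ℝ)^M)^2 * 2^n := by
        rw [mul_pow, mul_pow, e2]; ring
      have e4 : ((3/2:ℝ)^M)^2 = (9/4)^M := by
        rw [← pow_mul, mul_comm, pow_mul]; norm_num
      have e5 : ((4:ℝ)^n)^2 = 16^n := by
        rw [← pow_mul, mul_comm, pow_mul]; norm_num
      rw [e3, e4, e5, hMn]
      -- goal : 4 * (9/4)^(n+1) * 2^n ≤ 16^n
      have h4n : (0:ℝ) < 4^n := by positivity
      have hmul : (4 * ((9:ℝ)/4)^(n+1) * 2^n) * 4^n ≤ (16:ℝ)^n * 4^n := by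
        have e6 : (4 * ((9:ℝ)/4)^(n+1) * 2^n) * 4^n = 9^(n+1) * 2^n := by
          rw [show ((9:ℝ)/4)^(n+1) = 9^(n+1) / 4^(n+1) by rw [div_pow]]
          field_simp
          ring
        have e7 : (16:ℝ)^n * 4^n = 32^n * 2^n := by
          rw [← mul_pow, ← mul_pow]; norm_num
        rw [e6, e7]
        exact mul_le_mul_of_nonneg_right key (by positivity)
      exact le_of_mul_le_mul_right hmul h4n
    have := Real.sqrt_le_sqrt hsq
    rwa [Real.sqrt_sq hL0, Real.sqrt_sq hR0] at this
  have hcardS : (S.card : ℝ) ≤ X ^ (((M:ℝ)-1)/2) * 4^(M-1) := by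
    calc (S.card : ℝ) ≤ 2*(3/2)^M * (a⁻¹)^(M-1) := h6
      _ = (2*(3/2)^M * (Real.sqrt 2)^(M-1)) * (Real.sqrt X)^(M-1) := by
          rw [hainv, mul_pow]; ring
      _ ≤ (4:ℝ)^(M-1) * (Real.sqrt X)^(M-1) :=
          mul_le_mul_of_nonneg_right hconst (by positivity)
      _ = X ^ (((M:ℝ)-1)/2) * 4^(M-1) := by rw [hsqrtX]; ring
  have hcard𝒱 : (𝒱.card : ℝ) ≤ (K:ℝ) * (S.card : ℝ) := by
    have h1 : 𝒱.card ≤ ∑ k : Fin K, (S.image (ι k)).card := by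
      rw [h𝒱]; exact Finset.card_biUnion_le
    have h2 : ∀ k : Fin K, (S.image (ι k)).card ≤ S.card := fun k => Finset.card_image_le
    have h3 : 𝒱.card ≤ K * S.card := by
      calc 𝒱.card ≤ ∑ k : Fin K, (S.image (ι k)).card := h1
        _ ≤ ∑ _k : Fin K, S.card := Finset.sum_le_sum (fun k _ => h2 k)
        _ = K * S.card := by rw [Finset.sum_const, Finset.card_univ, Fintype.card_fin,
            smul_eq_mul]
    exact_mod_cast h3
  have hcard_main : (𝒱.card : ℝ) ≤ (K : ℝ) * X ^ (((M : ℝ) - 1) / 2) * 4 ^ (M - 1) := by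
    calc (𝒱.card : ℝ) ≤ (K:ℝ) * (S.card : ℝ) := hcard𝒱
      _ ≤ (K:ℝ) * (X ^ (((M:ℝ)-1)/2) * 4^(M-1)) :=
          mul_le_mul_of_nonneg_left hcardS (by positivity)
      _ = (K : ℝ) * X ^ (((M : ℝ) - 1) / 2) * 4 ^ (M - 1) := by ring
  -- the log bound
  have hK1 : (1:ℝ) ≤ (K:ℝ) := by exact_mod_cast hK
  have hXle : X ≤ (K:ℝ) * X := le_mul_of_one_le_left hX0 hK1
  have hKle : (K:ℝ) ≤ (K:ℝ) * X := le_mul_of_one_le_right (by linarith) (by linarith)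
  have hKX1 : (1:ℝ) ≤ (K:ℝ) * X := by linarith
  have hlogKX : 0 ≤ Real.log ((K:ℝ) * X) := Real.log_nonneg hKX1
  have hlog : Real.log (𝒱.card : ℝ) ≤ 3 * M * Real.log ((K : ℝ) * X) := by
    rcases Nat.eq_zero_or_pos 𝒱.card with h0 | hpos
    · rw [h0]
      simp only [Nat.cast_zero, Real.log_zero]
      positivity
    · have hc1 : (1:ℝ) ≤ (𝒱.card : ℝ) := by exact_mod_cast hpos
      have hlog2 : Real.log 2 ≤ Real.log ((K:ℝ) * X) :=
        Real.log_le_log (by norm_num) (by linarith)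
      have hlogK : Real.log (K:ℝ) ≤ Real.log ((K:ℝ) * X) :=
        Real.log_le_log (by linarith) hKle
      have hlogX : Real.log X ≤ Real.log ((K:ℝ) * X) :=
        Real.log_le_log (by linarith) hXle
      have h1 : Real.log (𝒱.card : ℝ)
          ≤ Real.log ((K : ℝ) * X ^ (((M : ℝ) - 1) / 2) * 4 ^ (M - 1)) :=
        Real.log_le_log (by linarith) (hcard_main)
      have hXpos : (0:ℝ) < X := by linarith
      have h2 : Real.log ((K : ℝ) * X ^ (((M : ℝ) - 1) / 2) * 4 ^ (M - 1))
          = Real.log (K:ℝ) + (((M:ℝ)-1)/2) * Real.log X + (M-1 : ℕ) * Real.log 4 := by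
        rw [Real.log_mul (by positivity) (by positivity),
          Real.log_mul (by positivity) (by positivity),
          Real.log_rpow hXpos, Real.log_pow]
      have h3 : Real.log 4 = 2 * Real.log 2 := by
        rw [show (4:ℝ) = 2^2 by norm_num, Real.log_pow]
        push_cast; ring
      have hMcast : ((M-1 : ℕ) : ℝ) = (M:ℝ) - 1 := by
        rw [Nat.cast_sub hM1, Nat.cast_one]
      have hM3 : (3:ℝ) ≤ (M:ℝ) := by exact_mod_cast hM
      have hMe : (0:ℝ) ≤ ((M:ℝ)-1)/2 := by linarith
      have hh : Real.log (𝒱.card : ℝ)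
          ≤ Real.log (K:ℝ) + (((M:ℝ)-1)/2) * Real.log X + ((M:ℝ)-1) * Real.log 4 := by
        rw [hMcast] at h2; exact h1.trans (le_of_eq h2)
      have hb1 : (((M:ℝ)-1)/2) * Real.log X ≤ (((M:ℝ)-1)/2) * Real.log ((K:ℝ)*X) :=
        mul_le_mul_of_nonneg_left hlogX hMe
      have hb2 : ((M:ℝ)-1) * Real.log 4 ≤ ((M:ℝ)-1) * (2*Real.log ((K:ℝ)*X)) := by
        apply mul_le_mul_of_nonneg_left _ (by linarith)
        rw [h3]; linarith
      have hcoef : (1 + ((M:ℝ)-1)/2 + 2*((M:ℝ)-1)) * Real.log ((K:ℝ)*X)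
          ≤ 3*(M:ℝ) * Real.log ((K:ℝ)*X) :=
        mul_le_mul_of_nonneg_right (by linarith) hlogKX
      linarith only [hh, hb1, hb2, hcoef, hlogK, hlogX, hlog2, hlogKX]
  -- final assembly
  refine ⟨𝒱, ?_, ⟨hcard_main, hlog⟩, ⟨hEA _, ?_, hEA _, ?_⟩, ?_⟩
  · intro v hv
    obtain ⟨k, y, hyS, rfl⟩ := (hmem v).mp hv
    exact hinner_self k y hyS
  · intro x hx k
    have h := hAE (t-ε) (by linarith) x hx k
    have heps : 0 < ε * ε := mul_pos hε hε
    have e : (t+ε)*(t-ε) = t*t - ε*ε := by ring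
    have h'' : t * blockNorm x k ≤ t * t := by linarith only [h, heps, e]
    exact le_of_mul_le_mul_left h'' ht0
  · intro x hx k
    have h := hAE t ht0.le x hx k
    have e : (t+ε)*t = t*(t+ε) := by ring
    have h'' : t * blockNorm x k ≤ t * (t+ε) := by linarith only [h, e]
    exact le_of_mul_le_mul_left h'' ht0
  · intro v hv
    obtain ⟨k, y, hyS, rfl⟩ := (hmem v).mp hv
    refine ⟨k, ?_, ?_⟩
    · intro h0
      simp only [hι] at h0
      have h0' : (fun j => y j) = (0 : Fin M → ℝ) := by
        rwa [Function.update_self] at h0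
      have hy0 : y = 0 := by
        apply PiLp.ext; intro j
        exact congrFun h0' j
      have := hS1 y hyS
      rw [hy0, norm_zero] at this
      norm_num at this
    · intro k' hk'
      by_contra hne
      apply hk'
      show ι k y k' = 0
      simp only [hι]
      rw [Function.update_of_ne hne]
      rfl
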